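/- Let Ω ⊆ ℝ² be open, v ∈ C^∞(Ω), β ∈ ℝ, and let x ∈ Ω be a point with Dv(x) ≠ 0. Let G(y) = |Dv(y)|^{β} Dv(y), which is C¹ on a neighborhood of x. Then −det DG(x) = (β + 1) |Dv(x)|^{2β−2} ( |D²v(x) Dv(x)|² − Δv(x) Δ∞v(x) ). -/

import Mathlib

open Real MeasureTheory
open scoped RealInnerProductSpace

noncomputable section

/-- The Euclidean plane ℝ². -/
abbrev E2 : Type := EuclideanSpace ℝ (Fin 2)

/-- Standard basis vector. -/
def ee (i : Fin 2) : E2 := EuclideanSpace.single i (1 : ℝ)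

/-- Partial derivative ∂ᵢf. -/
def pd (i : Fin 2) (f : E2 → ℝ) (x : E2) : ℝ := fderiv ℝ f x (ee i)

/-- Second partial derivative ∂ᵢ∂ⱼf. -/
def pd2 (i j : Fin 2) (f : E2 → ℝ) (x : E2) : ℝ := pd i (pd j f) x

/-- |Df|², squared Euclidean norm of the gradient. -/
def gradSq (f : E2 → ℝ) (x : E2) : ℝ := (pd 0 f x) ^ 2 + (pd 1 f x) ^ 2

/-- |Df|, Euclidean norm of the gradient. -/
def gradNorm (f : E2 → ℝ) (x : E2) : ℝ := Real.sqrt (gradSq f x)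

/-- Laplacian Δf = tr D²f. -/
def lap (f : E2 → ℝ) (x : E2) : ℝ := pd2 0 0 f x + pd2 1 1 f x

/-- ∞-Laplacian Δ∞f = D²f Df · Df. -/
def infLap (f : E2 → ℝ) (x : E2) : ℝ :=
  pd2 0 0 f x * pd 0 f x * pd 0 f x + pd2 0 1 f x * pd 0 f x * pd 1 f x +
  pd2 1 0 f x * pd 1 f x * pd 0 f x + pd2 1 1 f x * pd 1 f x * pd 1 f x

/-- |D²f|², squared Frobenius norm of the Hessian. -/
def hessFrobSq (f : E2 → ℝ) (x : E2) : ℝ :=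
  (pd2 0 0 f x) ^ 2 + (pd2 0 1 f x) ^ 2 + (pd2 1 0 f x) ^ 2 + (pd2 1 1 f x) ^ 2

/-- det D²f, determinant of the Hessian. -/
def detHess (f : E2 → ℝ) (x : E2) : ℝ :=
  pd2 0 0 f x * pd2 1 1 f x - pd2 0 1 f x * pd2 1 0 f x

/-- |D²f Df|². -/
def hessGradSq (f : E2 → ℝ) (x : E2) : ℝ :=
  (pd2 0 0 f x * pd 0 f x + pd2 0 1 f x * pd 1 f x) ^ 2 +
  (pd2 1 0 f x * pd 0 f x + pd2 1 1 f x * pd 1 f x) ^ 2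

/-- Jacobian determinant of the planar map with components `F 0`, `F 1`. -/
def jdet (F : Fin 2 → E2 → ℝ) (x : E2) : ℝ :=
  pd 0 (F 0) x * pd 1 (F 1) x - pd 1 (F 0) x * pd 0 (F 1) x

/-- Squared Frobenius norm of the Jacobian of the planar map with components `F 0`, `F 1`. -/
def jFrobSq (F : Fin 2 → E2 → ℝ) (x : E2) : ℝ :=
  (pd 0 (F 0) x) ^ 2 + (pd 1 (F 0) x) ^ 2 + (pd 0 (F 1) x) ^ 2 + (pd 1 (F 1) x) ^ 2

/-- Df · Dg. -/
def gradDot (f g : E2 → ℝ) (x : E2) : ℝ :=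
  pd 0 f x * pd 0 g x + pd 1 f x * pd 1 g x

/-- D²ψ Dv · Dv. -/
def hessQuad (ψ v : E2 → ℝ) (x : E2) : ℝ :=
  pd2 0 0 ψ x * pd 0 v x * pd 0 v x + pd2 0 1 ψ x * pd 0 v x * pd 1 v x +
  pd2 1 0 ψ x * pd 1 v x * pd 0 v x + pd2 1 1 ψ x * pd 1 v x * pd 1 v x

/-- (D²v Dv) · Dψ. -/
def hessGradDot (v ψ : E2 → ℝ) (x : E2) : ℝ :=
  (pd2 0 0 v x * pd 0 v x + pd2 0 1 v x * pd 1 v x) * pd 0 ψ x +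
  (pd2 1 0 v x * pd 0 v x + pd2 1 1 v x * pd 1 v x) * pd 1 ψ x

/-- Smooth compactly supported test function on Ω. -/
def IsTestOn (ψ : E2 → ℝ) (Ω : Set E2) : Prop :=
  ContDiff ℝ (⊤ : ℕ∞) ψ ∧ HasCompactSupport ψ ∧ tsupport ψ ⊆ Ω

/-- Components of W = |Dv|⁻¹ Dv. -/
def Wcomp (v : E2 → ℝ) (i : Fin 2) : E2 → ℝ := fun y => (gradNorm v y)⁻¹ * pd i v y

/-- −det DG = (β+1)|Dv|^{2β−2}(|D²vDv|² − Δv Δ∞v) where G = |Dv|^β Dv,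
at a point where Dv ≠ 0. -/
theorem stmt_13 (Ω : Set E2) (hΩ : IsOpen Ω) (v : E2 → ℝ)
    (hv : ContDiffOn ℝ (⊤ : ℕ∞) v Ω) (β : ℝ)
    (x : E2) (hx : x ∈ Ω) (hgrad : gradSq v x ≠ 0) :
    -jdet (fun i y => gradNorm v y ^ β * pd i v y) x
      = (β + 1) * gradNorm v x ^ (2*β - 2)
          * (hessGradSq v x - lap v x * infLap v x) := by
  have hx' : Ω ∈ nhds x := hΩ.mem_nhds hx
  have hvx : ContDiffAt ℝ (⊤ : ℕ∞) v x := hv.contDiffAt hx'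
  have hdf : HasFDerivAt (fderiv ℝ v) (fderiv ℝ (fderiv ℝ v) x) x := by
    have h1 : ContDiffAt ℝ 1 (fderiv ℝ v) x :=
      hvx.fderiv_right ((WithTop.coe_le_coe.mpr le_top).trans_eq rfl)
    exact (h1.differentiableAt one_ne_zero).hasFDerivAt
  set F2 := fderiv ℝ (fderiv ℝ v) x with hF2def
  have hpdj : ∀ j, HasFDerivAt (pd j v) (F2.flip (ee j)) x := by
    intro j
    have hpd : pd j v = fun y => fderiv ℝ v y (ee j) := rfl
    rw [hpd]
    have h := hdf.clm_apply (hasFDerivAt_const (ee j) x)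
    simpa using h
  have hp2 : ∀ i j, pd2 i j v x = F2 (ee i) (ee j) := by
    intro i j
    simp [pd2, pd, (hpdj j).fderiv]
  -- abbreviate
  set p := pd 0 v x with hp
  set q := pd 1 v x with hq
  have hsym : F2 (ee 1) (ee 0) = F2 (ee 0) (ee 1) := by
    have h := hvx.isSymmSndFDerivAt (n := ((⊤ : ℕ∞) : WithTop ℕ∞))
      (by rw [minSmoothness_of_isRCLikeNormedField]; show ((2:ℕ∞) : WithTop ℕ∞) ≤ ((⊤:ℕ∞) : WithTop ℕ∞); exact WithTop.coe_le_coe.mpr le_top)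
    exact h (ee 1) (ee 0)
  -- positivity facts
  have hspos : 0 < gradSq v x := by
    have hs : gradSq v x = p ^ 2 + q ^ 2 := rfl
    rcases lt_or_eq_of_le (by positivity : (0:ℝ) ≤ p ^ 2 + q ^ 2) with h | h
    · rw [hs]; exact h
    · exact absurd (hs.trans h.symm) hgrad
  have npos : 0 < gradNorm v x := Real.sqrt_pos.mpr hspos
  have hn0 : gradNorm v x ≠ 0 := ne_of_gt npos
  set n := gradNorm v x with hn
  have hnn : n * n = p ^ 2 + q ^ 2 := by
    rw [hn, gradNorm, Real.mul_self_sqrt hspos.le]; rfl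
  -- derivative of gradSq
  have hsqfun : (gradSq v) = fun y => pd 0 v y * pd 0 v y + pd 1 v y * pd 1 v y := by
    funext y; simp [gradSq, sq]
  have hgs : HasFDerivAt (gradSq v)
      ((p • F2.flip (ee 0) + p • F2.flip (ee 0)) + (q • F2.flip (ee 1) + q • F2.flip (ee 1))) x := by
    rw [hsqfun]
    exact ((hpdj 0).mul (hpdj 0)).add ((hpdj 1).mul (hpdj 1))
  -- derivative of gradNorm
  have hgn : HasFDerivAt (gradNorm v)
      ((1 / (2 * n)) • ((p • F2.flip (ee 0) + p • F2.flip (ee 0)) + (q • F2.flip (ee 1) + q • F2.flip (ee 1)))) x := by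
    have h := (Real.hasDerivAt_sqrt hgrad).comp_hasFDerivAt x hgs
    have hfun : ((√·) ∘ gradSq v) = gradNorm v := rfl
    rw [hfun] at h
    convert h using 2 <;> rfl
  -- derivative of gradNorm ^ β
  have hrp : HasFDerivAt (fun y => gradNorm v y ^ β)
      ((β * n ^ (β - 1)) • ((1 / (2 * n)) • ((p • F2.flip (ee 0) + p • F2.flip (ee 0)) + (q • F2.flip (ee 1) + q • F2.flip (ee 1))))) x := by
    have h := (Real.hasDerivAt_rpow_const (x := n) (p := β) (Or.inl hn0)).comp_hasFDerivAt x hgn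
    exact h
  set t := n ^ (β - 2) with ht
  have e2 : n ^ (2:ℝ) = n * n := by
    rw [show ((2:ℝ) = ((2:ℕ):ℝ)) by norm_num, Real.rpow_natCast]; ring
  have hb : n ^ β = t * (p ^ 2 + q ^ 2) := by
    have e1 : n ^ (β - 2) * n ^ (2:ℝ) = n ^ β := by
      rw [← Real.rpow_add npos]; norm_num
    rw [← e1, e2, hnn, ht]
  have hb1 : n ^ (β - 1) = t * n := by
    have e1 : n ^ (β - 2) * n ^ (1:ℝ) = n ^ (β - 1) := by
      rw [← Real.rpow_add npos]; ring_nf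
    rw [← e1, Real.rpow_one, ht]
  have hb2 : n ^ (2 * β - 2) = t * t * (p ^ 2 + q ^ 2) := by
    have e1 : n ^ (β - 2) * (n ^ (β - 2) * n ^ (2:ℝ)) = n ^ (2 * β - 2) := by
      rw [← Real.rpow_add npos, ← Real.rpow_add npos]; congr 1; ring
    rw [← e1, e2, hnn, ht]; ring
  -- clean formula for the partials of the map components
  have hDij : ∀ i j, pd i (fun y => gradNorm v y ^ β * pd j v y) x =
      t * ((p ^ 2 + q ^ 2) * F2 (ee i) (ee j)
        + β * pd j v x * (p * F2 (ee i) (ee 0) + q * F2 (ee i) (ee 1))) := by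
    intro i j
    have hF : HasFDerivAt (fun y => gradNorm v y ^ β * pd j v y)
        ((n ^ β) • F2.flip (ee j) + (pd j v x) •
          ((β * n ^ (β - 1)) • ((1 / (2 * n)) • ((p • F2.flip (ee 0) + p • F2.flip (ee 0)) + (q • F2.flip (ee 1) + q • F2.flip (ee 1)))))) x :=
      hrp.mul (hpdj j)
    rw [pd, hF.fderiv]
    simp only [ContinuousLinearMap.add_apply, ContinuousLinearMap.smul_apply,
      ContinuousLinearMap.flip_apply, smul_eq_mul]
    rw [hb, hb1]
    field_simp
    ring
  -- finish
  simp only [jdet]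
  rw [hDij 0 0, hDij 1 1, hDij 1 0, hDij 0 1]
  simp only [hessGradSq, lap, infLap, hp2, hsym, hb2, ← hp, ← hq]
  ring
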